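/- Let 3 ≤ r ≤ n. Let π₀ = B(V) be a q-subgeometry of PG(r-1,q^n) and l_∞ = PG(U) a line tangent to π₀ with centre T and not contained in the extension of any hyperplane of π₀. Then T ∈ S(π₀,l_∞) and there exists an r-dimensional K-subspace U₀ of U with B(U₀) = S(π₀,l_∞) and dim_K(U₀ ∩ T) = r-1; that is, the tangent splash S(π₀,l_∞) is an F_q-club of rank r with head the centre T. -/

import Mathlib

open Submodule Module

/-- `BSet L X` is the set of projective points (1-dimensional `L`-subspaces of `W`)
spanned by the nonzero vectors of `X`. -/
def BSet (L : Type*) [Field L] {W : Type*} [AddCommGroup W] [Module L W]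
    (X : Set W) : Set (Submodule L W) :=
  {P | ∃ x ∈ X, x ≠ 0 ∧ P = Submodule.span L {x}}

/-- The splash of the `q`-subgeometry `B(V)` of `PG(W)` on the line `PG(U)`:
the set of points of `PG(U)` lying in the `L`-span (extension) of some hyperplane
(`(r-1)`-dimensional `K`-subspace) of `V`. -/
def Splash (K L : Type*) [Field K] [Field L] [Algebra K L]
    {W : Type*} [AddCommGroup W] [Module L W] [Module K W] [IsScalarTower K L W]
    (V : Submodule K W) (U : Submodule L W) (r : ℕ) : Set (Submodule L W) :=
  {P | Module.finrank L P = 1 ∧ P ≤ U ∧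
    ∃ H : Submodule K W, H ≤ V ∧ Module.finrank K H = r - 1 ∧
      P ≤ Submodule.span L (H : Set W)}

section Aux

variable {K L : Type*} [Field K] [Field L] [Algebra K L] {r : ℕ}

/-- the `K`-rational hyperplane functional with coefficients `a` w.r.t. basis `e` -/
noncomputable def ell (e : Basis (Fin r) L (Fin r → L)) (a : Fin r → K) :
    (Fin r → L) →ₗ[L] L :=
  ∑ i, a i • e.coord i

lemma ell_apply (e : Basis (Fin r) L (Fin r → L)) (a : Fin r → K) (x : Fin r → L) :
    ell e a x = ∑ i, a i • e.repr x i := by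
  simp [ell, Basis.coord_apply]

lemma ell_basis (e : Basis (Fin r) L (Fin r → L)) (a : Fin r → K) (j : Fin r) :
    ell e a (e j) = algebraMap K L (a j) := by
  rw [ell_apply, Algebra.algebraMap_eq_smul_one]
  rw [Finset.sum_eq_single j]
  · simp
  · intro i _ hij; simp [Basis.repr_self, Finsupp.single_apply, Ne.symm hij]
  · simp

lemma ell_add (e : Basis (Fin r) L (Fin r → L)) (a b : Fin r → K) :
    ell e (a + b) = ell e a + ell e b := by
  simp [ell, add_smul, Finset.sum_add_distrib]

lemma ell_smul (e : Basis (Fin r) L (Fin r → L)) (c : K) (a : Fin r → K) :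
    ell e (c • a) = c • ell e a := by
  simp [ell, Finset.smul_sum, mul_smul]

/-- the map whose range is the club `U₀` -/
noncomputable def phi (e : Basis (Fin r) L (Fin r → L)) (t u : Fin r → L) :
    (Fin r → K) →ₗ[K] (Fin r → L) where
  toFun a := ell e a t • u - ell e a u • t
  map_add' a b := by
    show ell e (a + b) t • u - ell e (a + b) u • t = _
    rw [ell_add]; simp [add_smul]; abel
  map_smul' c a := by
    show ell e (c • a) t • u - ell e (c • a) u • t = _
    rw [ell_smul]
    simp only [LinearMap.smul_apply, RingHom.id_apply, smul_assoc, smul_sub]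

lemma phi_apply (e : Basis (Fin r) L (Fin r → L)) (t u : Fin r → L) (a : Fin r → K) :
    phi e t u a = ell e a t • u - ell e a u • t := rfl

/-- For nonzero `a`, the kernel of `ell e a` is the extension of a hyperplane of `V`. -/
lemma exists_hyperplane (e : Basis (Fin r) L (Fin r → L)) (V : Submodule K (Fin r → L))
    (heV : ∀ i, e i ∈ V) (a : Fin r → K) (ha : a ≠ 0) :
    ∃ H : Submodule K (Fin r → L), H ≤ V ∧ finrank K H = r - 1 ∧
      span L (H : Set (Fin r → L)) = LinearMap.ker (ell e a) := by
  obtain ⟨i₀, ha0⟩ : ∃ i₀, a i₀ ≠ 0 := Function.ne_iff.mp ha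
  set w : {i : Fin r // i ≠ i₀} → (Fin r → L) := fun i => a i₀ • e i.1 - a i.1 • e i₀ with hw
  have hcard : Fintype.card {i : Fin r // i ≠ i₀} = r - 1 := by
    rw [Fintype.card_subtype_compl, Fintype.card_subtype_eq, Fintype.card_fin]
  have hcoord : ∀ (j i : {i : Fin r // i ≠ i₀}),
      e.coord j.1 (w i) = if i = j then algebraMap K L (a i₀) else 0 := by
    intro j i
    rw [hw]
    simp only [map_sub, LinearMap.map_smul_of_tower, Basis.coord_apply, Basis.repr_self]
    rw [Finsupp.single_apply, Finsupp.single_apply]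
    rcases eq_or_ne i j with h | h
    · subst h
      simp [if_neg (Ne.symm i.2), Algebra.smul_def]
    · have : (i : Fin r) ≠ (j : Fin r) := fun hc => h (Subtype.ext hc)
      simp [if_neg this, if_neg (Ne.symm j.2), h]
  have hindepL : LinearIndependent L w := by
    rw [linearIndependent_iff']
    intro s lam hsum j hj
    have := congrArg (e.coord j.1) hsum
    rw [map_sum, map_zero] at this
    simp only [map_smul, hcoord] at this
    rw [Finset.sum_eq_single j] at this
    · simpa [ha0] using this
    · intro i his hij; simp [hij]
    · intro h; exact absurd hj h
  have hwV : ∀ i, w i ∈ V := fun i =>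
    V.sub_mem (V.smul_mem _ (heV _)) (V.smul_mem _ (heV _))
  refine ⟨span K (Set.range w), ?_, ?_, ?_⟩
  · rw [span_le]; rintro x ⟨i, rfl⟩; exact hwV i
  · have hindepK : LinearIndependent K w := by
      refine hindepL.restrict_scalars ?_
      intro c d h
      simp only [Algebra.smul_def, mul_one] at h
      exact (algebraMap K L).injective h
    rw [finrank_span_eq_card hindepK, hcard]
  · have hsub : span L (Set.range w) ≤ LinearMap.ker (ell e a) := by
      rw [span_le]
      rintro x ⟨i, rfl⟩
      simp only [SetLike.mem_coe, LinearMap.mem_ker, hw]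
      rw [map_sub, LinearMap.map_smul_of_tower, LinearMap.map_smul_of_tower,
        ell_basis, ell_basis, Algebra.smul_def, Algebra.smul_def, mul_comm, sub_self]
    have hker : finrank L (LinearMap.ker (ell e a)) = r - 1 := by
      have hsurj : LinearMap.range (ell e a) = ⊤ := by
        rw [LinearMap.range_eq_top]
        intro x
        refine ⟨(x / algebraMap K L (a i₀)) • e i₀, ?_⟩
        rw [map_smul, ell_basis, smul_eq_mul,
          div_mul_cancel₀ _ ((map_ne_zero (algebraMap K L)).mpr ha0)]
      have := (ell e a).finrank_range_add_finrank_ker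
      rw [hsurj, finrank_top, finrank_self, finrank_pi, Fintype.card_fin] at this
      omega
    have : span L ((span K (Set.range w) : Submodule K (Fin r → L)) : Set (Fin r → L))
        = span L (Set.range w) := span_span_of_tower K L _
    rw [this]
    refine Submodule.eq_of_le_of_finrank_eq hsub ?_
    rw [finrank_span_eq_card hindepL, hcard, hker]

end Aux

/-- a tangent splash with centre `T` is an `F_q`-club of rank `r`
with head `T`. -/
theorem tangent_splash_is_club
    (K L : Type*) [Field K] [Field L] [Algebra K L] [Fintype K] [Fintype L]
    (r n : ℕ) (hr : 3 ≤ r) (hrn : r ≤ n) (hrank : Module.finrank K L = n)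
    (V : Submodule K (Fin r → L))
    (hVrank : Module.finrank K V = r)
    (hVspan : Submodule.span L (V : Set (Fin r → L)) = ⊤)
    (U : Submodule L (Fin r → L)) (hU : Module.finrank L U = 2)
    (T : Submodule L (Fin r → L))
    (htangent : {P | P ∈ BSet L (V : Set (Fin r → L)) ∧ P ≤ U} = {T})
    (hext : ∀ H : Submodule K (Fin r → L), H ≤ V → Module.finrank K H = r - 1 →
      ¬ U ≤ Submodule.span L (H : Set (Fin r → L))) :
    T ∈ Splash K L V U r ∧
      ∃ U₀ : Submodule K (Fin r → L), U₀ ≤ U.restrictScalars K ∧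
        Module.finrank K U₀ = r ∧
        BSet L (U₀ : Set (Fin r → L)) = Splash K L V U r ∧
        Module.finrank K ↥(U₀ ⊓ T.restrictScalars K) = r - 1 := by
  haveI : FiniteDimensional K L :=
    FiniteDimensional.of_finrank_pos (by rw [hrank]; omega)
  -- a K-basis of V which is also an L-basis of the ambient space
  let b : Basis (Fin r) K V := finBasisOfFinrankEq K V hVrank
  have hVsub : (V : Set (Fin r → L)) ⊆
      (span L (Set.range fun i => (b i : Fin r → L)) : Submodule L (Fin r → L)) := by
    intro v hv
    have hrepr : (⟨v, hv⟩ : V) = ∑ i, b.repr ⟨v, hv⟩ i • b i := (b.sum_repr ⟨v, hv⟩).symm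
    have hv2 : v = ∑ i, b.repr ⟨v, hv⟩ i • (b i : Fin r → L) := by
      have := congrArg (Subtype.val) hrepr
      refine this.trans ?_
      simp only [AddSubmonoidClass.coe_finset_sum, SetLike.val_smul]
    rw [SetLike.mem_coe, hv2]
    exact sum_mem fun i _ =>
      smul_of_tower_mem _ _ (subset_span (Set.mem_range_self i))
  have hle : ⊤ ≤ span L (Set.range fun i => (b i : Fin r → L)) := by
    rw [← hVspan, span_le]
    exact hVsub
  have hcard : Fintype.card (Fin r) = finrank L (Fin r → L) := by
    rw [Fintype.card_fin, finrank_pi, Fintype.card_fin]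
  let e : Basis (Fin r) L (Fin r → L) := basisOfTopLeSpanOfCardEqFinrank _ hle hcard
  have heb : ∀ i, e i = (b i : Fin r → L) :=
    fun i => congrFun (coe_basisOfTopLeSpanOfCardEqFinrank _ hle hcard) i
  have heV : ∀ i, e i ∈ V := fun i => (heb i) ▸ (b i).2
  -- the value of ell on elements of V
  have hellV : ∀ (v : V) (a : Fin r → K),
      ell e a (v : Fin r → L) = algebraMap K L (∑ i, a i * b.repr v i) := by
    intro v a
    have hv2 : (v : Fin r → L) = ∑ i, b.repr v i • e i := by
      have hrepr := b.sum_repr v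
      have := congrArg (Subtype.val) hrepr
      simp only [heb]
      refine this.symm.trans ?_
      simp only [AddSubmonoidClass.coe_finset_sum, SetLike.val_smul]
    rw [hv2, map_sum]
    rw [map_sum]
    refine Finset.sum_congr rfl fun i _ => ?_
    rw [LinearMap.map_smul_of_tower, ell_basis, Algebra.smul_def, ← map_mul, mul_comm]
  -- for every hyperplane H of V there is a nonzero a with ell e a vanishing on H
  have hannih : ∀ H : Submodule K (Fin r → L), H ≤ V → finrank K H = r - 1 →
      ∃ a : Fin r → K, a ≠ 0 ∧ ∀ h ∈ H, ell e a h = 0 := by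
    intro H hHV hHrank
    let ccrd : H →ₗ[K] (Fin r → K) :=
      (Finsupp.linearEquivFunOnFinite K K (Fin r)).toLinearMap ∘ₗ
        (b.repr.toLinearMap ∘ₗ Submodule.inclusion hHV)
    have hccrd_inj : Function.Injective ccrd := by
      intro x y hxy
      apply inclusion_injective hHV
      apply b.repr.injective
      apply (Finsupp.linearEquivFunOnFinite K K (Fin r)).injective
      exact hxy
    have hCrank : finrank K (LinearMap.range ccrd) = r - 1 := by
      rw [LinearMap.finrank_range_of_inj hccrd_inj, hHrank]
    have hClt : LinearMap.range ccrd < ⊤ := by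
      rw [lt_top_iff_ne_top]
      intro hC
      rw [hC, finrank_top, finrank_pi, Fintype.card_fin] at hCrank
      omega
    obtain ⟨f, hf0, hfC⟩ := Submodule.exists_dual_map_eq_bot_of_lt_top hClt inferInstance
    have hfx : ∀ x : Fin r → K, f x = ∑ i, x i * f (fun j => if i = j then 1 else 0) := by
      intro x
      conv_lhs => rw [pi_eq_sum_univ x]
      rw [map_sum]
      exact Finset.sum_congr rfl fun i _ => by rw [map_smul, smul_eq_mul]
    refine ⟨fun i => f (fun j => if i = j then 1 else 0), ?_, ?_⟩
    · intro ha
      apply hf0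
      apply LinearMap.ext
      intro x
      rw [hfx x]
      simp only [LinearMap.zero_apply]
      refine Finset.sum_eq_zero fun i _ => ?_
      rw [congrFun ha i, Pi.zero_apply, mul_zero]
    · intro h hh
      have hmem : ccrd ⟨h, hh⟩ ∈ LinearMap.range ccrd := LinearMap.mem_range_self _ _
      have hfz : f (ccrd ⟨h, hh⟩) = 0 := by
        have : f (ccrd ⟨h, hh⟩) ∈ Submodule.map f (LinearMap.range ccrd) :=
          Submodule.mem_map_of_mem hmem
        rw [hfC] at this
        simpa using this
      rw [hfx] at hfz
      have hV : h ∈ V := hHV hh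
      rw [hellV ⟨h, hV⟩]
      rw [show (∑ i, (fun i => f (fun j => if i = j then 1 else 0)) i * b.repr ⟨h, hV⟩ i)
          = ∑ i, (ccrd ⟨h, hh⟩) i * f (fun j => if i = j then 1 else 0) from ?_, hfz, map_zero]
      refine Finset.sum_congr rfl fun i _ => ?_
      rw [mul_comm]
      rfl
  -- extract the tangent point data
  have hTmem : T ∈ {P | P ∈ BSet L (V : Set (Fin r → L)) ∧ P ≤ U} := by
    rw [htangent]; rfl
  obtain ⟨⟨t, htV, ht0, hTt⟩, hTU⟩ := hTmem
  have htU : t ∈ U := hTU (hTt ▸ mem_span_singleton_self t)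
  -- complete t to a basis of U
  have hTfin : finrank L T = 1 := by rw [hTt]; exact finrank_span_singleton ht0
  have hTltU : T < U := by
    refine lt_of_le_of_ne hTU ?_
    intro hTeq
    rw [hTeq, hU] at hTfin
    omega
  obtain ⟨u, huU, huT⟩ := SetLike.exists_of_lt hTltU
  have hut : u ∉ (span L {t} : Submodule L (Fin r → L)) := hTt ▸ huT
  have hpair : LinearIndependent L ![t, u] := by
    rw [LinearIndependent.pair_iff]
    intro s c hsc
    have hc : c = 0 := by
      by_contra hc
      apply hut
      rw [mem_span_singleton]
      have h1 : c • u = -(s • t) := by rw [eq_neg_iff_add_eq_zero, add_comm]; exact hsc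
      have h2 := congrArg (fun z => c⁻¹ • z) h1
      simp only [smul_smul, inv_mul_cancel₀ hc, one_smul, smul_neg] at h2
      exact ⟨-(c⁻¹ * s), by rw [neg_smul]; exact h2.symm⟩
    subst hc
    rw [zero_smul, add_zero, smul_eq_zero] at hsc
    exact ⟨hsc.resolve_right ht0, rfl⟩
  have hUspan : (span L {t, u} : Submodule L (Fin r → L)) = U := by
    have hle2 : (span L {t, u} : Submodule L (Fin r → L)) ≤ U := by
      rw [span_le]
      rintro x (rfl | rfl)
      · exact htU
      · exact huU
    refine Submodule.eq_of_le_of_finrank_eq hle2 ?_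
    have hre : Set.range ![t, u] = {t, u} := by
      simp [Matrix.range_cons, Matrix.range_empty]
      exact Set.pair_comm u t
    rw [hU, ← hre, finrank_span_eq_card hpair]
    rfl
  -- key consequence of hext
  have hkey : ∀ a : Fin r → K, a ≠ 0 → ¬(ell e a t = 0 ∧ ell e a u = 0) := by
    rintro a ha ⟨hat, hau⟩
    obtain ⟨H, hHV, hHrank, hHker⟩ := exists_hyperplane e V heV a ha
    refine hext H hHV hHrank ?_
    rw [← hUspan, hHker, span_le]
    rintro x (rfl | rfl)
    · exact LinearMap.mem_ker.mpr hat
    · exact LinearMap.mem_ker.mpr hau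
  -- phi is injective
  have hphi0 : ∀ a : Fin r → K, phi e t u a = 0 → a = 0 := by
    intro a hpa
    by_contra ha
    rw [phi_apply] at hpa
    rcases LinearIndependent.pair_iff.mp hpair (-(ell e a u)) (ell e a t) (by
      rw [neg_smul, add_comm, ← sub_eq_add_neg]; exact hpa) with ⟨h1, h2⟩
    exact hkey a ha ⟨h2, neg_eq_zero.mp h1⟩
  have hphiinj : Function.Injective (phi (K := K) e t u) := by
    apply LinearMap.ker_eq_bot.mp
    rw [eq_bot_iff]
    intro a ha
    exact hphi0 a (LinearMap.mem_ker.mp ha)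
  have hphiU : ∀ a : Fin r → K, phi (K := K) e t u a ∈ U := by
    intro a
    rw [phi_apply]
    exact U.sub_mem (U.smul_mem _ huU) (U.smul_mem _ htU)
  have hU₀le : LinearMap.range (phi (K := K) e t u) ≤ U.restrictScalars K := by
    rintro x ⟨a, rfl⟩
    exact hphiU a
  have hU₀rank : finrank K (LinearMap.range (phi (K := K) e t u)) = r := by
    rw [LinearMap.finrank_range_of_inj hphiinj, finrank_pi, Fintype.card_fin]
  -- the functional giving the head
  have hτmk : t ∈ V := htV
  let τ : Fin r → K := fun i => b.repr ⟨t, hτmk⟩ i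
  have hτ0 : τ ≠ 0 := by
    intro h
    apply ht0
    have h2 : (⟨t, hτmk⟩ : V) = 0 := by
      rw [← b.repr.map_eq_zero_iff]
      ext i
      simpa using congrFun h i
    exact congrArg Subtype.val h2
  let gmap : (Fin r → K) →ₗ[K] K := ∑ i, τ i • LinearMap.proj i
  have hgmap : ∀ a, gmap a = ∑ i, a i * τ i := by
    intro a
    simp [gmap, mul_comm]
  have hgt : ∀ a, ell e a t = algebraMap K L (gmap a) := by
    intro a
    rw [hellV ⟨t, hτmk⟩ a, hgmap]
  obtain ⟨j, hτj⟩ : ∃ j, τ j ≠ 0 := Function.ne_iff.mp hτ0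
  have hgsurj : LinearMap.range gmap = ⊤ := by
    rw [LinearMap.range_eq_top]
    intro x
    refine ⟨Pi.single j (x * (τ j)⁻¹), ?_⟩
    rw [hgmap, Finset.sum_eq_single j]
    · rw [Pi.single_eq_same]
      field_simp
    · intro i _ hij
      rw [Pi.single_eq_of_ne hij, zero_mul]
    · simp
  have hgker : finrank K (LinearMap.ker gmap) = r - 1 := by
    have h2 := gmap.finrank_range_add_finrank_ker
    rw [hgsurj, finrank_top, finrank_self, finrank_pi, Fintype.card_fin] at h2
    omega
  -- intersection with the head
  have hinter : LinearMap.range (phi (K := K) e t u) ⊓ T.restrictScalars K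
      = Submodule.map (phi (K := K) e t u) (LinearMap.ker gmap) := by
    apply le_antisymm
    · intro x hx
      obtain ⟨hx1, hx2⟩ := Submodule.mem_inf.mp hx
      obtain ⟨a, rfl⟩ := hx1
      have hxT : phi (K := K) e t u a ∈ T := hx2
      rw [hTt, mem_span_singleton] at hxT
      obtain ⟨c, hc⟩ := hxT
      rw [phi_apply] at hc
      have hat : ell e a t = 0 := by
        by_contra hat
        apply hut
        have h3 : ell e a t • u = (c + ell e a u) • t := by
          rw [add_smul, hc]
          abel
        have h4 := congrArg (fun z => (ell e a t)⁻¹ • z) h3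
        simp only [smul_smul, inv_mul_cancel₀ hat, one_smul] at h4
        rw [h4, mem_span_singleton]
        exact ⟨_, rfl⟩
      refine ⟨a, ?_, rfl⟩
      show gmap a = 0
      have := hgt a
      rw [hat] at this
      exact ((map_eq_zero (algebraMap K L)).mp this.symm)
    · rintro x ⟨a, haker, rfl⟩
      refine Submodule.mem_inf.mpr ⟨LinearMap.mem_range_self _ a, ?_⟩
      have hat : ell e a t = 0 := by
        rw [hgt a, LinearMap.mem_ker.mp haker, map_zero]
      show phi (K := K) e t u a ∈ T
      rw [hTt, phi_apply, hat, zero_smul, zero_sub, mem_span_singleton]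
      exact ⟨-(ell e a u), by rw [neg_smul]⟩
  have hfinr_inter : finrank K
      ↥(LinearMap.range (phi (K := K) e t u) ⊓ T.restrictScalars K) = r - 1 := by
    rw [hinter, ← hgker]
    exact (Submodule.equivMapOfInjective _ hphiinj (LinearMap.ker gmap)).symm.finrank_eq
  -- BSet U₀ = Splash
  have hBS : BSet L ((LinearMap.range (phi (K := K) e t u) :
      Submodule K (Fin r → L)) : Set (Fin r → L)) = Splash K L V U r := by
    ext P
    constructor
    · rintro ⟨x, hx, hx0, rfl⟩
      obtain ⟨a, rfl⟩ := hx
      have ha : a ≠ 0 := fun h => hx0 (by rw [h, map_zero])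
      obtain ⟨H, hHV, hHrank, hHker⟩ := exists_hyperplane e V heV a ha
      refine ⟨finrank_span_singleton hx0, ?_, H, hHV, hHrank, ?_⟩
      · rw [span_le, Set.singleton_subset_iff]
        exact hphiU a
      · rw [hHker, span_le, Set.singleton_subset_iff]
        have : ell e a (phi (K := K) e t u a) = 0 := by
          rw [phi_apply, map_sub, map_smul, map_smul, smul_eq_mul, smul_eq_mul,
            mul_comm, sub_self]
        exact LinearMap.mem_ker.mpr this
    · rintro ⟨hP1, hPU, H, hHV, hHrank, hPH⟩
      obtain ⟨a, ha, haH⟩ := hannih H hHV hHrank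
      have hPker : P ≤ LinearMap.ker (ell e a) := by
        refine le_trans hPH ?_
        rw [span_le]
        intro h hh
        exact LinearMap.mem_ker.mpr (haH h hh)
      have hPbot : P ≠ ⊥ := by
        intro h
        rw [h, finrank_bot] at hP1
        omega
      obtain ⟨x, hxP, hx0⟩ := Submodule.exists_mem_ne_zero_of_ne_bot hPbot
      have hPx : P = span L {x} := by
        symm
        refine Submodule.eq_of_le_of_finrank_eq ?_ ?_
        · rw [span_le, Set.singleton_subset_iff]
          exact hxP
        · rw [finrank_span_singleton hx0, hP1]
      have hxU : x ∈ U := hPU hxP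
      rw [← hUspan, mem_span_pair] at hxU
      obtain ⟨γ, δ, hγδ⟩ := hxU
      have hxker : ell e a x = 0 := LinearMap.mem_ker.mp (hPker hxP)
      have heq : γ * ell e a t + δ * ell e a u = 0 := by
        rw [← smul_eq_mul, ← smul_eq_mul, ← map_smul, ← map_smul, ← map_add, hγδ]
        exact hxker
      have hphia0 : phi (K := K) e t u a ≠ 0 := fun h => ha (hphi0 a h)
      refine ⟨phi (K := K) e t u a, LinearMap.mem_range_self _ a, hphia0, ?_⟩
      rw [hPx]
      by_cases hg : ell e a t = 0
      · have hf : ell e a u ≠ 0 := fun hf => hkey a ha ⟨hg, hf⟩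
        have hδ : δ = 0 := by
          rw [hg, mul_zero, zero_add, mul_eq_zero] at heq
          exact heq.resolve_right hf
        have hγ : γ ≠ 0 := by
          intro h
          apply hx0
          rw [← hγδ, h, hδ]
          simp
        have hxe : x = γ • t := by
          rw [← hγδ, hδ]
          simp
        have hphia : phi (K := K) e t u a = (-(ell e a u)) • t := by
          rw [phi_apply, hg, zero_smul, zero_sub, neg_smul]
        rw [hxe, hphia, span_singleton_smul_eq (IsUnit.mk0 γ hγ) t,
          span_singleton_smul_eq (IsUnit.mk0 _ (neg_ne_zero.mpr hf)) t]
      · have hδ0 : δ ≠ 0 := by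
          intro h
          rw [h, zero_mul, add_zero, mul_eq_zero] at heq
          rcases heq with h1 | h1
          · apply hx0
            rw [← hγδ, h, h1]
            simp
          · exact hg h1
        have hco : δ / ell e a t * ell e a u = -γ := by
          field_simp
          linear_combination heq
        have hxe : x = (δ / ell e a t) • (phi (K := K) e t u a) := by
          rw [phi_apply, smul_sub, smul_smul, smul_smul, div_mul_cancel₀ _ hg, hco,
            neg_smul, sub_neg_eq_add, ← hγδ, add_comm]
        rw [hxe, span_singleton_smul_eq (IsUnit.mk0 _ (div_ne_zero hδ0 hg)) _]
  -- T is in the splash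
  have hTS : T ∈ Splash K L V U r := by
    rw [← hBS]
    have hkerbot : LinearMap.ker gmap ≠ ⊥ := by
      intro h
      rw [h, finrank_bot] at hgker
      omega
    obtain ⟨a, haker, ha0⟩ := Submodule.exists_mem_ne_zero_of_ne_bot hkerbot
    have hat : ell e a t = 0 := by
      rw [hgt a, LinearMap.mem_ker.mp haker, map_zero]
    have hau : ell e a u ≠ 0 := fun h => hkey a ha0 ⟨hat, h⟩
    have hphia : phi (K := K) e t u a = (-(ell e a u)) • t := by
      rw [phi_apply, hat, zero_smul, zero_sub, neg_smul]
    refine ⟨phi (K := K) e t u a, LinearMap.mem_range_self _ a, ?_, ?_⟩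
    · rw [hphia]
      exact smul_ne_zero (neg_ne_zero.mpr hau) ht0
    · rw [hTt, hphia, span_singleton_smul_eq (IsUnit.mk0 _ (neg_ne_zero.mpr hau)) t]
  exact ⟨hTS, LinearMap.range (phi (K := K) e t u), hU₀le, hU₀rank, hBS, hfinr_inter⟩
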